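/- For every n ≥ 5, the wheel W_n is a 3-connected graph that contains no contractible non-edge. -/

import Mathlib

open SimpleGraph

variable {V : Type*}

/-- A graph is `k`-connected: it has at least `k+1` vertices, and removing any set of
fewer than `k` vertices leaves a connected graph. -/
def KConnected (k : ℕ) (G : SimpleGraph V) : Prop :=
  k + 1 ≤ Nat.card V ∧ ∀ S : Set V, S.ncard < k → (G.induce Sᶜ).Connected

/-- Contraction of the non-edge `{u, v}`: `u` and `v` are replaced by a single
vertex (represented here by `u`), adjacent to every vertex that was adjacent to
`u` or to `v`. -/
def contractNonEdge (G : SimpleGraph V) (u v : V) : SimpleGraph {w : V // w ≠ v} where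
  Adj a b := a ≠ b ∧ (G.Adj a.1 b.1 ∨ (a.1 = u ∧ G.Adj v b.1) ∨ (b.1 = u ∧ G.Adj a.1 v))
  symm := by
    constructor
    rintro a b ⟨hab, h | ⟨h1, h2⟩ | ⟨h1, h2⟩⟩
    · exact ⟨hab.symm, Or.inl h.symm⟩
    · exact ⟨hab.symm, Or.inr (Or.inr ⟨h1, h2.symm⟩)⟩
    · exact ⟨hab.symm, Or.inr (Or.inl ⟨h1, h2.symm⟩)⟩
  loopless := ⟨fun a h => h.1 rfl⟩

/-- `{u, v}` is a contractible non-edge of `G`: a non-edge whose contraction yields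
a `3`-connected graph. -/
def IsContractibleNonEdge (G : SimpleGraph V) (u v : V) : Prop :=
  u ≠ v ∧ ¬ G.Adj u v ∧ KConnected 3 (contractNonEdge G u v)

/-- The set of contractible non-edges of `G`, as unordered pairs of vertices. -/
def contractibleNonEdges (G : SimpleGraph V) : Set (Sym2 V) :=
  {p | ∃ u v : V, p = s(u, v) ∧ IsContractibleNonEdge G u v}

/-- `S` is a cut of `G`: deleting the vertices of `S` leaves a disconnected graph. -/
def IsCutSet (G : SimpleGraph V) (S : Set V) : Prop :=
  ¬ (G.induce Sᶜ).Preconnected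

/-- `C` is the vertex set of a (connected) component of `G − S`. -/
def IsCompOf (G : SimpleGraph V) (S : Set V) (C : Set V) : Prop :=
  C.Nonempty ∧ C ⊆ Sᶜ ∧ (G.induce C).Connected ∧
    ∀ x ∈ C, ∀ y, y ∉ S → G.Adj x y → y ∈ C

/-- The wheel `W n` of order `n`: the cycle `1 - 2 - ⋯ - (n-1) - 1` of order `n-1`,
together with a hub `0` adjacent to all vertices of the cycle. -/
def wheel (n : ℕ) : SimpleGraph (Fin n) :=
  SimpleGraph.fromRel fun a b =>
    (a.1 = 0 ∧ b.1 ≠ 0) ∨ (a.1 + 1 = b.1 ∧ 1 ≤ a.1) ∨ (a.1 = 1 ∧ b.1 = n - 1)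


lemma wheel_adj {n : ℕ} (a b : Fin n) : (wheel n).Adj a b ↔ a ≠ b ∧
    (a.1 = 0 ∨ b.1 = 0 ∨ (1 ≤ a.1 ∧ a.1 + 1 = b.1) ∨ (1 ≤ b.1 ∧ b.1 + 1 = a.1) ∨
      (a.1 = 1 ∧ b.1 = n - 1) ∨ (b.1 = 1 ∧ a.1 = n - 1)) := by
  have hne : a ≠ b ↔ a.1 ≠ b.1 := by
    constructor
    · intro h h'; exact h (Fin.ext h')
    · intro h h'; exact h (by rw [h'])
  simp only [wheel, SimpleGraph.fromRel_adj]
  constructor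
  · rintro ⟨h1, h2⟩
    refine ⟨h1, ?_⟩
    rw [hne] at h1
    omega
  · rintro ⟨h1, h2⟩
    refine ⟨h1, ?_⟩
    rw [hne] at h1
    omega

lemma reach_chain {n : ℕ} (hn : 5 ≤ n) (S : Set (Fin n)) (i : ℕ) (hi : 1 ≤ i) :
    ∀ j, i ≤ j → j ≤ n - 1 →
    (∀ k, i ≤ k → k ≤ j → ∀ (hk : k < n), (⟨k, hk⟩ : Fin n) ∉ S) →
    ∀ (hi' : i < n) (hj' : j < n) (hmi : (⟨i, hi'⟩ : Fin n) ∈ Sᶜ) (hmj : (⟨j, hj'⟩ : Fin n) ∈ Sᶜ),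
      ((wheel n).induce Sᶜ).Reachable ⟨⟨i, hi'⟩, hmi⟩ ⟨⟨j, hj'⟩, hmj⟩ := by
  clear hn
  intro j hij
  induction j, hij using Nat.le_induction with
  | base =>
    intro _ _ hi' hj' hmi hmj
    have : (⟨⟨i, hi'⟩, hmi⟩ : ↥Sᶜ) = ⟨⟨i, hj'⟩, hmj⟩ := rfl
    rw [this]
  | succ j hj ih =>
    intro hle hcond hi' hj' hmi hmj
    have hjlt : j < n := by omega
    have hmidj : (⟨j, hjlt⟩ : Fin n) ∈ Sᶜ := hcond j hj (by omega) hjlt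
    have h1 : ((wheel n).induce Sᶜ).Reachable ⟨⟨i, hi'⟩, hmi⟩ ⟨⟨j, hjlt⟩, hmidj⟩ :=
      ih (by omega) (fun k hk1 hk2 hk => hcond k hk1 (by omega) hk) hi' hjlt hmi hmidj
    have hadj : ((wheel n).induce Sᶜ).Adj ⟨⟨j, hjlt⟩, hmidj⟩ ⟨⟨j + 1, hj'⟩, hmj⟩ := by
      show (wheel n).Adj ⟨j, hjlt⟩ ⟨j + 1, hj'⟩
      rw [wheel_adj]
      simp only [ne_eq, Fin.mk.injEq, Fin.val_mk, and_true, true_and]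
      omega
    exact h1.trans hadj.reachable

lemma walk_pres {W : Type*} {G : SimpleGraph W} {P : W → Prop}
    (h : ∀ a b, G.Adj a b → P a → P b) : ∀ {a b : W}, G.Walk a b → P a → P b := by
  intro a b w
  induction w with
  | nil => exact id
  | cons hadj _ ih => exact fun ha => ih (h _ _ hadj ha)

lemma wheel_3conn {n : ℕ} (hn : 5 ≤ n) : KConnected 3 (wheel n) := by
  constructor
  · rw [Nat.card_eq_fintype_card, Fintype.card_fin]; omega
  · intro S hS
    rw [SimpleGraph.connected_iff]
    have hz0 : 0 < n := by omega
    refine ⟨?_, ?_⟩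
    · set z : Fin n := ⟨0, hz0⟩ with hzdef
      by_cases h0 : z ∈ S
      · -- hub removed; at most one rim vertex removed
        have key : ∀ a b : Fin n, a ∈ S → b ∈ S → a ≠ z → b ≠ z → a = b := by
          intro a b ha hb haz hbz
          by_contra hab
          have hsub : ({z, a, b} : Set (Fin n)) ⊆ S := by
            intro w hw
            simp only [Set.mem_insert_iff, Set.mem_singleton_iff] at hw
            rcases hw with h | h | h
            · rw [h]; exact h0
            · rw [h]; exact ha
            · rw [h]; exact hb
          have h3 : ({z, a, b} : Set (Fin n)).ncard = 3 := by
            rw [Set.ncard_insert_of_notMem (by simp [Ne.symm haz, Ne.symm hbz])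
              (Set.toFinite _), Set.ncard_pair hab]
          have := Set.ncard_le_ncard hsub (Set.toFinite S)
          omega
        obtain ⟨m, hmprop⟩ : ∃ m : ℕ, ∀ k, 1 ≤ k → k ≠ m → ∀ (hk : k < n),
            (⟨k, hk⟩ : Fin n) ∉ S := by
          by_cases hm : ∃ w ∈ S, w ≠ z
          · obtain ⟨w, hwS, hwz⟩ := hm
            refine ⟨w.1, fun k hk1 hkm hk hkS => hkm ?_⟩
            have hkz : (⟨k, hk⟩ : Fin n) ≠ z := by
              intro h
              have := congrArg Fin.val h
              simp only [hzdef, Fin.val_mk] at this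
              omega
            exact congrArg Fin.val (key _ _ hkS hwS hkz hwz)
          · push_neg at hm
            refine ⟨0, fun k hk1 hkm hk hkS => ?_⟩
            have := congrArg Fin.val (hm _ hkS)
            simp only [hzdef, Fin.val_mk] at this
            omega
        have haux : ∀ (x y : Fin n) (hx : x ∈ Sᶜ) (hy : y ∈ Sᶜ), x.1 ≤ y.1 →
            ((wheel n).induce Sᶜ).Reachable ⟨x, hx⟩ ⟨y, hy⟩ := by
          intro x y hx hy hxy
          have hx1 : 1 ≤ x.1 := by
            rcases Nat.eq_zero_or_pos x.1 with h | h
            · exfalso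
              apply hx
              have hxz : x = z := Fin.ext (by simp [hzdef, h])
              rw [hxz]; exact h0
            · exact h
          have hy1 : 1 ≤ y.1 := by omega
          have hxn : x.1 ≤ n - 1 := by have := x.isLt; omega
          have hyn : y.1 ≤ n - 1 := by have := y.isLt; omega
          have hmx : (⟨x.1, x.isLt⟩ : Fin n) ∈ Sᶜ := by rw [Fin.eta]; exact hx
          have hmy : (⟨y.1, y.isLt⟩ : Fin n) ∈ Sᶜ := by rw [Fin.eta]; exact hy
          have e1 : (⟨⟨x.1, x.isLt⟩, hmx⟩ : ↥Sᶜ) = ⟨x, hx⟩ := Subtype.ext (Fin.eta x x.isLt)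
          have e2 : (⟨⟨y.1, y.isLt⟩, hmy⟩ : ↥Sᶜ) = ⟨y, hy⟩ := Subtype.ext (Fin.eta y y.isLt)
          by_cases hmid : x.1 < m ∧ m < y.1
          · have h1n : (1:ℕ) < n := by omega
            have hn1 : n - 1 < n := by omega
            have hm1 : (⟨1, h1n⟩ : Fin n) ∈ Sᶜ := hmprop 1 le_rfl (by omega) h1n
            have hmn1 : (⟨n-1, hn1⟩ : Fin n) ∈ Sᶜ := hmprop (n-1) (by omega) (by omega) hn1
            have c1 := reach_chain hn S 1 le_rfl x.1 hx1 hxn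
              (fun k hk1 hk2 hk => hmprop k hk1 (by omega) hk) h1n x.isLt hm1 hmx
            have c2 := reach_chain hn S y.1 hy1 (n-1) hyn le_rfl
              (fun k hk1 hk2 hk => hmprop k (by omega) (by omega) hk) y.isLt hn1 hmy hmn1
            have hadj : ((wheel n).induce Sᶜ).Adj ⟨⟨1, h1n⟩, hm1⟩ ⟨⟨n-1, hn1⟩, hmn1⟩ := by
              show (wheel n).Adj ⟨1, h1n⟩ ⟨n-1, hn1⟩
              rw [wheel_adj]
              simp only [ne_eq, Fin.mk.injEq, Fin.val_mk]
              exact ⟨by omega, by tauto⟩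
            rw [e1] at c1
            rw [e2] at c2
            exact (c1.symm.trans hadj.reachable).trans c2.symm
          · have hcond : ∀ k, x.1 ≤ k → k ≤ y.1 → ∀ (hk : k < n), (⟨k, hk⟩ : Fin n) ∉ S := by
              intro k hk1 hk2 hk
              by_cases hkm : k = m
              · have hxy' : k = x.1 ∨ k = y.1 := by omega
                rcases hxy' with h | h
                · have : (⟨k, hk⟩ : Fin n) = x := Fin.ext h
                  rw [this]; exact hx
                · have : (⟨k, hk⟩ : Fin n) = y := Fin.ext h
                  rw [this]; exact hy
              · exact hmprop k (by omega) hkm hk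
            have c := reach_chain hn S x.1 hx1 y.1 hxy hyn hcond x.isLt y.isLt hmx hmy
            rw [e1, e2] at c
            exact c
        rintro ⟨x, hx⟩ ⟨y, hy⟩
        rcases le_total x.1 y.1 with h | h
        · exact haux x y hx hy h
        · exact (haux y x hy hx h).symm
      · -- hub available
        have hz' : z ∈ Sᶜ := h0
        have adjhub : ∀ (w : Fin n) (hw : w ∈ Sᶜ), w ≠ z →
            ((wheel n).induce Sᶜ).Adj ⟨w, hw⟩ ⟨z, hz'⟩ := by
          intro w hw hne
          show (wheel n).Adj w z
          rw [wheel_adj]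
          exact ⟨hne, Or.inr (Or.inl rfl)⟩
        rintro ⟨x, hx⟩ ⟨y, hy⟩
        by_cases hxy : x = y
        · subst hxy
          have : (⟨x, hx⟩ : ↥Sᶜ) = ⟨x, hy⟩ := rfl
          rw [this]
        · by_cases hxz : x = z
          · have e : (⟨x, hx⟩ : ↥Sᶜ) = ⟨z, hz'⟩ := Subtype.ext hxz
            rw [e]
            exact (adjhub y hy (fun h => hxy (hxz.trans h.symm))).reachable.symm
          · by_cases hyz : y = z
            · have e : (⟨y, hy⟩ : ↥Sᶜ) = ⟨z, hz'⟩ := Subtype.ext hyz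
              rw [e]
              exact (adjhub x hx hxz).reachable
            · exact (adjhub x hx hxz).reachable.trans (adjhub y hy hyz).reachable.symm
    · by_contra hne
      have hall : ∀ x : Fin n, x ∈ S := by
        intro x
        by_contra hxS
        exact hne ⟨⟨x, hxS⟩⟩
      have huniv : S = Set.univ := Set.eq_univ_of_forall hall
      rw [huniv, Set.ncard_univ, Nat.card_eq_fintype_card, Fintype.card_fin] at hS
      omega

lemma wheel_no_contractible {n : ℕ} (hn : 5 ≤ n) : contractibleNonEdges (wheel n) = ∅ := by
  rw [Set.eq_empty_iff_forall_notMem]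
  rintro p ⟨u, v, hp, huv, hnadj, hkc⟩
  have hu0 : u.1 ≠ 0 := fun h => hnadj ((wheel_adj u v).mpr ⟨huv, Or.inl h⟩)
  have hv0 : v.1 ≠ 0 := fun h => hnadj ((wheel_adj u v).mpr ⟨huv, Or.inr (Or.inl h)⟩)
  have hnd : ¬(u.1 = 0 ∨ v.1 = 0 ∨ (1 ≤ u.1 ∧ u.1 + 1 = v.1) ∨ (1 ≤ v.1 ∧ v.1 + 1 = u.1) ∨
      (u.1 = 1 ∧ v.1 = n - 1) ∨ (v.1 = 1 ∧ u.1 = n - 1)) :=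
    fun h => hnadj ((wheel_adj u v).mpr ⟨huv, h⟩)
  have hvals : u.1 ≠ v.1 := fun h => huv (Fin.ext h)
  have hun : u.1 ≤ n - 1 := by have := u.isLt; omega
  have hvn : v.1 ≤ n - 1 := by have := v.isLt; omega
  set u0 := min u.1 v.1 with hu0def
  set v0 := max u.1 v.1 with hv0def
  have hf1 : 1 ≤ u0 := by omega
  have hf2 : u0 + 1 < v0 := by omega
  have hf3 : v0 ≤ n - 1 := by omega
  have hf4 : ¬(u0 = 1 ∧ v0 = n - 1) := by omega
  have h0lt : (0:ℕ) < n := by omega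
  have h0v : (⟨0, h0lt⟩ : Fin n) ≠ v := fun h => hv0 (congrArg Fin.val h).symm
  set z : {w : Fin n // w ≠ v} := ⟨⟨0, h0lt⟩, h0v⟩ with hzdef
  set uu : {w : Fin n // w ≠ v} := ⟨u, huv⟩ with huudef
  have hzu : z ≠ uu := by
    intro h
    exact hu0 ((congrArg (fun w => (Subtype.val w).val) h).symm)
  set S : Set {w : Fin n // w ≠ v} := {z, uu} with hSdef
  have hconn := hkc.2 S (by rw [Set.ncard_pair hzu]; omega)
  have hpre := hconn.preconnected
  obtain ⟨b0, hb1, hb2, hb3, hb4, hb5⟩ :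
      ∃ b0 : ℕ, 1 ≤ b0 ∧ b0 ≤ n - 1 ∧ b0 ≠ u0 ∧ b0 ≠ v0 ∧ ¬(u0 < b0 ∧ b0 < v0) := by
    rcases Nat.lt_or_ge 1 u0 with h | h
    · exact ⟨u0 - 1, by omega⟩
    · exact ⟨v0 + 1, by omega⟩
  have mkmem : ∀ (k : ℕ) (hk : k < n), k ≠ 0 → k ≠ u.1 → k ≠ v.1 →
      ∃ (hkv : (⟨k, hk⟩ : Fin n) ≠ v), (⟨⟨k, hk⟩, hkv⟩ : {w : Fin n // w ≠ v}) ∈ Sᶜ := by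
    intro k hk hk0 hku hkv
    have h1 : (⟨k, hk⟩ : Fin n) ≠ v := fun h => hkv (congrArg Fin.val h)
    refine ⟨h1, ?_⟩
    simp only [hSdef, Set.mem_compl_iff, Set.mem_insert_iff, Set.mem_singleton_iff, not_or]
    constructor
    · intro h
      exact hk0 (congrArg (fun w => (Subtype.val w).val) h)
    · intro h
      exact hku (congrArg (fun w => (Subtype.val w).val) h)
  have ha0 : u0 + 1 < n := by omega
  obtain ⟨hav, haS⟩ := mkmem (u0 + 1) ha0 (by omega) (by omega) (by omega)
  have hbn : b0 < n := by omega
  obtain ⟨hbv, hbS⟩ := mkmem b0 hbn (by omega) (by omega) (by omega)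
  have step : ∀ a b : ↥Sᶜ, ((contractNonEdge (wheel n) u v).induce Sᶜ).Adj a b →
      (u0 < a.1.1.1 ∧ a.1.1.1 < v0) → (u0 < b.1.1.1 ∧ b.1.1.1 < v0) := by
    intro a b hab hPa
    have hmema := a.2
    have hmemb := b.2
    simp only [hSdef, Set.mem_compl_iff, Set.mem_insert_iff, Set.mem_singleton_iff,
      not_or] at hmema hmemb
    have hau : a.1.1.1 ≠ u.1 := fun h => hmema.2 (Subtype.ext (Fin.ext h))
    have hbu : b.1.1.1 ≠ u.1 := fun h => hmemb.2 (Subtype.ext (Fin.ext h))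
    have hb0' : b.1.1.1 ≠ 0 := fun h => hmemb.1 (Subtype.ext (Fin.ext h))
    have hbv' : b.1.1.1 ≠ v.1 := fun h => b.1.2 (Fin.ext h)
    have hadj : (contractNonEdge (wheel n) u v).Adj a.1 b.1 := hab
    obtain ⟨hne, hor⟩ := hadj
    have hG : (wheel n).Adj a.1.1 b.1.1 := by
      rcases hor with h | ⟨h1, _⟩ | ⟨h1, _⟩
      · exact h
      · exact absurd (congrArg Fin.val h1) hau
      · exact absurd (congrArg Fin.val h1) hbu
    rw [wheel_adj] at hG
    obtain ⟨_, hd⟩ := hG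
    have hbn' : b.1.1.1 ≤ n - 1 := by have := b.1.1.isLt; omega
    clear * - hPa hbu hb0' hbv' hbn' hd hf1 hf2 hf3 hvals hun hvn
    omega
  obtain ⟨w⟩ := hpre ⟨⟨⟨u0 + 1, ha0⟩, hav⟩, haS⟩ ⟨⟨⟨b0, hbn⟩, hbv⟩, hbS⟩
  have hfin := walk_pres step w ⟨by show u0 < u0 + 1; omega, by show u0 + 1 < v0; omega⟩
  exact hb5 ⟨hfin.1, hfin.2⟩

/-- For every `n ≥ 5`, the wheel `W_n` is a 3-connected graph that contains no
contractible non-edge. -/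
theorem stmt16 (n : ℕ) (hn : 5 ≤ n) :
    KConnected 3 (wheel n) ∧ contractibleNonEdges (wheel n) = ∅ :=
  ⟨wheel_3conn hn, wheel_no_contractible hn⟩
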